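/- Let K be a field of characteristic not 2, let s ∈ K with s ≠ ±2 and s ≠ -6, and set s' = (-2s+12)/(s+2). The rational map (x,y) ↦ (X,Y) with X = (1/(s+2))·(2x+s)(x-1)/(x+1) and Y = (4/(s+2))·(x²+2x+s-1)/(x+1)²·y sends points of E: y² = c(x+1)(x²+sx+1) (with x ≠ -1) to points of E': Y² = c'(X+1)(X²+s'X+1), where c' = 2c(s+2); that is, the identity Y² = c'(X+1)(X²+s'X+1) holds whenever y² = c(x+1)(x²+sx+1) and x ≠ -1. -/

import Mathlib

set_option maxHeartbeats 1600000 in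
/-- The explicit 2-isogeny `E → E'`: with `s' = (-2s+12)/(s+2)`,
`c' = 2c(s+2)`, `X = (1/(s+2))·(2x+s)(x-1)/(x+1)`, and
`Y = (4/(s+2))·(x²+2x+s-1)/(x+1)²·y`, if `y² = c(x+1)(x²+sx+1)` and `x ≠ -1`
then `Y² = c'(X+1)(X²+s'X+1)`. -/
theorem stmt6 (K : Type*) [Field K] (h2 : (2 : K) ≠ 0)
    (c s : K) (hc : c ≠ 0) (hs2 : s ≠ 2) (hs2' : s ≠ -2) (hs6 : s ≠ -6)
    (x y : K) (hx : x ≠ -1)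
    (h : y ^ 2 = c * (x + 1) * (x ^ 2 + s * x + 1)) :
    ((4 / (s + 2)) * ((x ^ 2 + 2 * x + s - 1) / (x + 1) ^ 2) * y) ^ 2 =
      (2 * c * (s + 2)) *
        ((1 / (s + 2)) * ((2 * x + s) * (x - 1) / (x + 1)) + 1) *
        (((1 / (s + 2)) * ((2 * x + s) * (x - 1) / (x + 1))) ^ 2 +
          ((-2 * s + 12) / (s + 2)) * ((1 / (s + 2)) * ((2 * x + s) * (x - 1) / (x + 1))) + 1) := by

  have hx1 : x + 1 ≠ 0 := fun hh => hx (by linear_combination hh)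
  have hs : s + 2 ≠ 0 := fun hh => hs2' (by linear_combination hh)
  have hd : (s + 2) * (x + 1) ≠ 0 := mul_ne_zero hs hx1
  have hd2 : ((s + 2) * (x + 1)) ^ 2 ≠ 0 := pow_ne_zero _ hd
  have hd3 : (s + 2) * (x + 1) * ((s + 2) * (x + 1)) ^ 2 ≠ 0 := mul_ne_zero hd hd2
  have hD1 : ((s + 2) ^ 2 * (x + 1) ^ 4 : K) ≠ 0 :=
    mul_ne_zero (pow_ne_zero _ hs) (pow_ne_zero _ hx1)
  have hq : (1 / (s + 2)) * ((2 * x + s) * (x - 1) / (x + 1))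
      = ((2 * x + s) * (x - 1)) / ((s + 2) * (x + 1)) := by
    rw [div_mul_div_comm, one_mul]
  have he : ((-2 * s + 12) / (s + 2)) * (((2 * x + s) * (x - 1)) / ((s + 2) * (x + 1)))
      = ((-2 * s + 12) * ((2 * x + s) * (x - 1)) * (x + 1)) / (((s + 2) * (x + 1)) ^ 2) := by
    rw [div_mul_div_comm, div_eq_div_iff (mul_ne_zero hs hd) hd2]; ring
  have L : ((4 / (s + 2)) * ((x ^ 2 + 2 * x + s - 1) / (x + 1) ^ 2) * y) ^ 2
      = (16 * (x ^ 2 + 2 * x + s - 1) ^ 2 * y ^ 2) / ((s + 2) ^ 2 * (x + 1) ^ 4) := by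
    rw [eq_div_iff hD1]; field_simp; ring
  rw [L, h, hq, div_pow, he, ← add_div, div_add' _ _ _ hd, div_add' _ _ _ hd2,
    mul_div_assoc', mul_div_assoc', div_mul_eq_mul_div, div_div, div_eq_div_iff hD1 (mul_ne_zero hd hd2)]
  ring
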